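/- Let T be a commutative ring, let R be a T-algebra whose underlying ring is a principal left ideal domain (a nontrivial ring without zero divisors in which every left ideal is generated by a single element), let n ≥ 1, and let K = M(n,R) be the full n×n matrix algebra over R. Then every T-algebra automorphism φ of K is a product of an inner automorphism and a ring automorphism: there exist an invertible matrix u ∈ K and a T-algebra automorphism α of R such that φ(A) = u · ᾱ(A) · u⁻¹ for all A ∈ K, where ᾱ(A) is obtained by applying α to every entry of A. -/

import Mathlib

universe u

section ModLemma
variable {R : Type u} [Ring R] [Nontrivial R] [NoZeroDivisors R]

theorem embeds_free (hpli : ∀ I : Ideal R, Submodule.IsPrincipal I) :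
    ∀ (n : ℕ) (M : Type u) [AddCommGroup M] [Module R M] (f : M →ₗ[R] (Fin n → R)),
      Function.Injective f → ∃ k ≤ n, Nonempty (M ≃ₗ[R] (Fin k → R)) := by
  intro n
  induction n with
  | zero =>
    intro M _ _ f hf
    refine ⟨0, le_refl _, ⟨?_⟩⟩
    have : Subsingleton M := ⟨fun a b => hf (Subsingleton.elim _ _)⟩
    exact LinearEquiv.ofSubsingleton _ _
  | succ n ih =>
    intro M _ _ f hf
    set π : M →ₗ[R] R := (LinearMap.proj (Fin.last n)).comp f with hπdef
    obtain ⟨a, ha⟩ := (hpli (LinearMap.range π)).principal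
    by_cases h0 : a = 0
    · -- range π = 0, M embeds into Fin n → R
      have hz : ∀ x : M, π x = 0 := by
        have h0' : LinearMap.range π = ⊥ := by rw [ha, h0]; exact Submodule.span_zero_singleton R
        intro x
        have : π x ∈ LinearMap.range π := ⟨x, rfl⟩
        rw [h0'] at this
        simpa using this
      set g : M →ₗ[R] (Fin n → R) := (LinearMap.funLeft R R Fin.castSucc).comp f with hg
      have hginj : Function.Injective g := by
        intro x y hxy
        apply hf
        funext i
        refine Fin.lastCases ?_ ?_ i
        · have hx := hz x; have hy := hz y
          simp only [hπdef, LinearMap.comp_apply, LinearMap.proj_apply] at hx hy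
          rw [hx, hy]
        · intro i
          exact congrFun hxy i
      obtain ⟨k, hk, he⟩ := ih M g hginj
      exact ⟨k, hk.trans (Nat.le_succ n), he⟩
    · -- a ≠ 0
      have hamem : a ∈ LinearMap.range π := by rw [ha]; exact Submodule.mem_span_singleton_self a
      obtain ⟨m, hm⟩ := hamem
      -- coefficient map
      have hcoef : ∀ x : M, ∃! r : R, r * a = π x := by
        intro x
        have : π x ∈ LinearMap.range π := ⟨x, rfl⟩
        rw [ha] at this
        obtain ⟨r, hr⟩ := Submodule.mem_span_singleton.mp this
        rw [smul_eq_mul] at hr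
        refine ⟨r, hr, ?_⟩
        intro r' hr'
        have : (r' - r) * a = 0 := by rw [sub_mul, hr, hr']; exact sub_self _
        rcases mul_eq_zero.mp this with h | h
        · exact sub_eq_zero.mp h
        · exact absurd h h0
      choose ρ hρ hρu' using hcoef
      have hρu : ∀ (x : M) (r' : R), r' * a = π x → ρ x = r' := fun x r' h => (hρu' x r' h).symm
      have hρ_add : ∀ x y : M, ρ (x + y) = ρ x + ρ y := by
        intro x y
        apply hρu
        rw [add_mul, hρ, hρ, map_add]
      have hρ_smul : ∀ (r : R) (x : M), ρ (r • x) = r * ρ x := by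
        intro r x
        apply hρu
        rw [mul_assoc, hρ, map_smul, smul_eq_mul]
      set ρl : M →ₗ[R] R := ⟨⟨ρ, hρ_add⟩, hρ_smul⟩ with hρl
      set K := LinearMap.ker π with hK
      -- K embeds into Fin n → R
      set g : K →ₗ[R] (Fin n → R) :=
        ((LinearMap.funLeft R R Fin.castSucc).comp f).comp K.subtype with hg
      have hginj : Function.Injective g := by
        intro x y hxy
        apply Subtype.ext
        apply hf
        funext i
        refine Fin.lastCases ?_ ?_ i
        · have hx := x.2; have hy := y.2
          simp only [hK, LinearMap.mem_ker, hπdef, LinearMap.comp_apply,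
            LinearMap.proj_apply] at hx hy
          rw [hx, hy]
        · intro i; exact congrFun hxy i
      obtain ⟨k, hk, ⟨e⟩⟩ := ih K g hginj
      -- M ≃ K × R
      have hsplit : ∀ x : M, x - ρ x • m ∈ K := by
        intro x
        simp only [hK, LinearMap.mem_ker, map_sub, map_smul, smul_eq_mul, hm]
        rw [hρ x]
        exact sub_self _
      set eM : M ≃ₗ[R] K × R :=
        { toFun := fun x => (⟨x - ρ x • m, hsplit x⟩, ρ x)
          map_add' := by
            intro x y
            ext
            · show (x + y) - ρ (x+y) • m = (x - ρ x • m) + (y - ρ y • m)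
              rw [hρ_add, add_smul]; abel
            · exact hρ_add x y
          map_smul' := by
            intro r x
            ext
            · show (r • x) - ρ (r • x) • m = r • (x - ρ x • m)
              rw [hρ_smul, smul_sub, mul_smul]
            · exact hρ_smul r x
          invFun := fun p => (p.1 : M) + p.2 • m
          left_inv := by intro x; simp
          right_inv := by
            intro p
            have hρm : ρ (m : M) = 1 := by apply hρu; rw [one_mul, hm]
            have h1 : ρ ((p.1 : M) + p.2 • m) = p.2 := by
              rw [hρ_add, hρ_smul, hρm, mul_one]
              have : ρ (p.1 : M) = 0 := by
                apply hρu
                rw [zero_mul]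
                exact (LinearMap.mem_ker.mp p.1.2).symm
              rw [this, zero_add]
            ext
            · show ((p.1 : M) + p.2 • m) - ρ ((p.1:M) + p.2 • m) • m = (p.1 : M)
              rw [h1]; abel
            · exact h1 } with heM
      refine ⟨k + 1, Nat.succ_le_succ hk, ⟨?_⟩⟩
      have E2 : (K × R) ≃ₗ[R] (Fin (k+1) → R) :=
        ((e.prodCongr ((LinearEquiv.funUnique (Fin 1) R R).symm : R ≃ₗ[R] (Fin 1 → R))).trans
          ((LinearEquiv.sumArrowLequivProdArrow (Fin k) (Fin 1) R R).symm)).trans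
          (LinearEquiv.funCongrLeft R R finSumFinEquiv.symm)
      exact eM.trans E2


section Cyclic
variable {R : Type u} [Ring R] [Nontrivial R] [NoZeroDivisors R]

/-- vecMul as a left-linear map, valid over noncommutative rings. -/
def vecMulLM {n : ℕ} (A : Matrix (Fin n) (Fin n) R) : (Fin n → R) →ₗ[R] (Fin n → R) where
  toFun v := Matrix.vecMul v A
  map_add' x y := Matrix.add_vecMul A x y
  map_smul' r x := Matrix.smul_vecMul r x A

@[simp] lemma vecMulLM_apply {n : ℕ} (A : Matrix (Fin n) (Fin n) R) (v : Fin n → R) :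
    vecMulLM A v = Matrix.vecMul v A := rfl

/-- The curry linear equivalence. -/
def curryLE (ι κ : Type*) : (ι × κ → R) ≃ₗ[R] (ι → κ → R) :=
  { Equiv.curry ι κ R with
    map_add' := fun _ _ => rfl
    map_smul' := fun _ _ => rfl }

theorem exists_outer (hpli : ∀ I : Ideal R, Submodule.IsPrincipal I)
    {n : ℕ} (hn : 1 ≤ n) (f : Fin n → Fin n → Matrix (Fin n) (Fin n) R)
    (hmul : ∀ i j k l, f i j * f k l = if j = k then f i l else 0)
    (hsum : ∑ i, f i i = 1) (i0 : Fin n) :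
    ∃ c w : Fin n → R, ∀ a b, f i0 i0 a b = c a * w b := by
  classical
  set W := LinearMap.range (vecMulLM (f i0 i0)) with hW
  have hfmul : ∀ i j k l, f i j * f k l = if j = k then f i l else 0 := hmul
  have hid : ∀ i j, f i j * f j i0 = f i i0 := by
    intro i j; rw [hmul]; simp
  have hid2 : ∀ i j k, f i j * f j k = f i k := by
    intro i j k; rw [hmul]; simp
  -- key sum identity
  have key : ∀ v : Fin n → R, ∑ i, Matrix.vecMul v (f i i) = v := by
    intro v; funext b
    rw [Finset.sum_apply]
    have h1 : ∀ i, Matrix.vecMul v (f i i) b = ∑ t, v t * f i i t b := by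
      intro i; rfl
    simp_rw [h1]
    rw [Finset.sum_comm]
    have h2 : ∀ t, ∑ i, v t * f i i t b = v t * (∑ i, f i i) t b := by
      intro t
      rw [Matrix.sum_apply, Finset.mul_sum]
    simp_rw [h2, hsum, Matrix.one_apply]
    simp [mul_ite]
  -- membership characterization
  have hmem : ∀ x : Fin n → R, x ∈ W ↔ Matrix.vecMul x (f i0 i0) = x := by
    intro x
    constructor
    · rintro ⟨v, rfl⟩
      show Matrix.vecMul (Matrix.vecMul v (f i0 i0)) (f i0 i0) = _
      rw [Matrix.vecMul_vecMul, hid i0 i0]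
      rfl
    · intro h; exact ⟨x, h⟩
  -- the decomposition equivalence (Fin n → R) ≃ₗ (Fin n → W)
  have hmemF : ∀ (i : Fin n) (v : Fin n → R), Matrix.vecMul v (f i i0) ∈ W := by
    intro i v
    rw [hmem, Matrix.vecMul_vecMul, hid i i0]
  set F : (Fin n → R) →ₗ[R] (Fin n → W) :=
    LinearMap.pi (fun i => LinearMap.codRestrict W (vecMulLM (f i i0)) (fun v => hmemF i v))
    with hF
  set G : (Fin n → W) →ₗ[R] (Fin n → R) :=
    ∑ i : Fin n, (vecMulLM (f i0 i)).comp (W.subtype.comp (LinearMap.proj i)) with hG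
  have hGapp : ∀ x : Fin n → W, G x = ∑ i, Matrix.vecMul (x i : Fin n → R) (f i0 i) := by
    intro x
    rw [hG, LinearMap.sum_apply]
    rfl
  have hGF : ∀ v, G (F v) = v := by
    intro v
    rw [hGapp]
    have : ∀ i, Matrix.vecMul ((F v i : Fin n → R)) (f i0 i) = Matrix.vecMul v (f i i) := by
      intro i
      show Matrix.vecMul (Matrix.vecMul v (f i i0)) (f i0 i) = _
      rw [Matrix.vecMul_vecMul, hid2]
    rw [Finset.sum_congr rfl (fun i _ => this i)]
    exact key v
  have hFG : ∀ x, F (G x) = x := by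
    intro x
    funext i
    apply Subtype.ext
    show Matrix.vecMul (G x) (f i i0) = (x i : Fin n → R)
    rw [hGapp]
    have hsv : Matrix.vecMul (∑ j, Matrix.vecMul (x j : Fin n → R) (f i0 j)) (f i i0)
        = ∑ j, Matrix.vecMul (Matrix.vecMul (x j : Fin n → R) (f i0 j)) (f i i0) :=
      map_sum (vecMulLM (f i i0)) _ _
    rw [hsv]
    have : ∀ j, Matrix.vecMul (Matrix.vecMul (x j : Fin n → R) (f i0 j)) (f i i0)
        = if j = i then Matrix.vecMul (x i : Fin n → R) (f i0 i0) else 0 := by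
      intro j
      rw [Matrix.vecMul_vecMul, hmul]
      by_cases h : j = i
      · subst h; simp
      · simp [h, Matrix.vecMul_zero]
    rw [Finset.sum_congr rfl (fun j _ => this j), Finset.sum_ite_eq' _ i]
    simp [(hmem _).mp (x i).2]
  set En : (Fin n → R) ≃ₗ[R] (Fin n → W) := LinearEquiv.ofLinear F G
    (LinearMap.ext hFG) (LinearMap.ext hGF) with hEn
  -- W embeds in Fin n → R, hence is free of rank k ≤ n
  obtain ⟨k, hk, ⟨e⟩⟩ := embeds_free hpli n W W.subtype Subtype.coe_injective
  -- invariant basis number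
  have hnoeth : IsNoetherianRing R := (isNoetherianRing_iff_ideal_fg R).mpr
    (fun I => (hpli I).fg)
  have big : (Fin (n * k) → R) ≃ₗ[R] (Fin n → R) :=
    ((LinearEquiv.funCongrLeft R R (finProdFinEquiv : Fin n × Fin k ≃ Fin (n * k))).trans
      ((curryLE (Fin n) (Fin k)).trans
        ((LinearEquiv.piCongrRight (fun _ : Fin n => e.symm)).trans En.symm)))
  have hnk : n * k = n := eq_of_fin_equiv R big
  have hk1 : k = 1 := Nat.eq_of_mul_eq_mul_left (lt_of_lt_of_le zero_lt_one hn)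
    (by rw [hnk, mul_one])
  subst hk1
  -- generator of W
  set w' : W := e.symm (fun _ => 1) with hw'
  have hgen : ∀ x : W, x = (e x 0) • w' := by
    intro x
    have h1 : e x = (e x 0) • ((fun _ => (1 : R)) : Fin 1 → R) := by
      funext i
      have : i = 0 := Subsingleton.elim i 0
      subst this
      simp
    calc x = e.symm (e x) := (e.symm_apply_apply x).symm
      _ = e.symm ((e x 0) • ((fun _ => (1 : R)) : Fin 1 → R)) := by rw [← h1]
      _ = (e x 0) • w' := by rw [map_smul, hw']
  have hrmem : ∀ a, f i0 i0 a ∈ W := by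
    intro a
    exact ⟨Pi.single a 1, by rw [vecMulLM_apply, Matrix.single_one_vecMul]; rfl⟩
  refine ⟨fun a => e ⟨f i0 i0 a, hrmem a⟩ 0, (w' : Fin n → R), ?_⟩
  intro a b
  have h2 := hgen ⟨f i0 i0 a, hrmem a⟩
  have h3 := congrArg (fun z : W => (z : Fin n → R) b) h2
  simpa using h3

end Cyclic


set_option maxHeartbeats 1600000 in
/-- If `R` is a `T`-algebra whose underlying ring is a principal left ideal domain
(a nontrivial ring without zero divisors in which every left ideal is principal), every
`T`-algebra automorphism of the full matrix algebra `M(n,R)` is a product of an inner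
automorphism and a ring automorphism. -/
theorem stmt16 (T R : Type*) [CommRing T] [Ring R] [Algebra T R] [Nontrivial R]
    [NoZeroDivisors R] (hpli : ∀ I : Ideal R, Submodule.IsPrincipal I)
    (n : ℕ) (hn : 1 ≤ n)
    (φ : Matrix (Fin n) (Fin n) R ≃ₐ[T] Matrix (Fin n) (Fin n) R) :
    ∃ (u : (Matrix (Fin n) (Fin n) R)ˣ) (α : R ≃ₐ[T] R),
      ∀ A : Matrix (Fin n) (Fin n) R, φ A = Units.val u * A.map ⇑α * Units.val u⁻¹ := by
  classical
  have hi0 : (0 : ℕ) < n := hn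
  set i0 : Fin n := ⟨0, hi0⟩ with hi0def
  haveI : Nonempty (Fin n) := ⟨i0⟩
  set E : Fin n → Fin n → Matrix (Fin n) (Fin n) R :=
    fun i j => Matrix.single i j 1 with hE
  set g : Fin n → Fin n → Matrix (Fin n) (Fin n) R := fun i j => φ (E i j) with hg
  have hEmul : ∀ i j k l, E i j * E k l = if j = k then E i l else 0 := by
    intro i j k l
    by_cases h : j = k
    · subst h
      rw [if_pos rfl, hE]
      simpa using Matrix.single_mul_single_same (1:R) i j k 1
    · rw [if_neg h, hE]
      exact Matrix.single_mul_single_of_ne (1:R) i j k h (1:R)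
  have hEsum : (∑ i, E i i) = 1 := by
    ext a b
    simp only [Matrix.sum_apply, hE, Matrix.single, Matrix.of_apply, Matrix.one_apply]
    by_cases h : a = b
    · subst h; rw [Finset.sum_eq_single a] <;> simp +contextual
    · rw [if_neg h, Finset.sum_eq_zero]
      intro i _
      by_cases h1 : i = a <;> by_cases h2 : i = b <;> simp_all
  have hgmul : ∀ i j k l, g i j * g k l = if j = k then g i l else 0 := by
    intro i j k l
    rw [hg]
    simp only
    rw [← map_mul, hEmul]
    split_ifs <;> simp
  have hgsum : (∑ i, g i i) = 1 := by
    rw [hg]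
    simp only
    rw [← map_sum, hEsum, map_one]
  obtain ⟨c, w, hcw⟩ := exists_outer hpli hn g hgmul hgsum i0
  -- outer product matrices
  set C : Matrix (Fin n) (Fin n) R := Matrix.vecMulVec c (Pi.single i0 1) with hC
  set Wm : Matrix (Fin n) (Fin n) R := Matrix.vecMulVec (Pi.single i0 1) w with hWm
  have vecMulVec_mul : ∀ (x y : Fin n → R) (M : Matrix (Fin n) (Fin n) R),
      Matrix.vecMulVec x y * M = Matrix.vecMulVec x (Matrix.vecMul y M) := by
    intro x y M
    ext a b
    simp only [Matrix.mul_apply, Matrix.vecMulVec_apply, Matrix.vecMul, dotProduct,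
      Finset.mul_sum, mul_assoc]
  have mul_vecMulVec : ∀ (x y : Fin n → R) (M : Matrix (Fin n) (Fin n) R),
      M * Matrix.vecMulVec x y = Matrix.vecMulVec (Matrix.mulVec M x) y := by
    intro x y M
    ext a b
    simp only [Matrix.mul_apply, Matrix.vecMulVec_apply, Matrix.mulVec, dotProduct,
      Finset.sum_mul, mul_assoc]
  have hCWm : C * Wm = g i0 i0 := by
    rw [hC, hWm, vecMulVec_mul, Matrix.single_one_vecMul]
    ext a b
    rw [Matrix.vecMulVec_apply, hcw a b]
    simp [Matrix.vecMulVec_apply]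
  have hrow : Matrix.vecMul (Pi.single i0 (1:R)) (E i0 i0) = Pi.single i0 1 := by
    rw [hE, Matrix.single_one_vecMul]
    ext b
    simp [Matrix.single, Pi.single_apply, eq_comm]
  have hcol : Matrix.mulVec (E i0 i0) (Pi.single i0 (1:R)) = Pi.single i0 1 := by
    rw [hE]
    simp only [Matrix.single_mulVec]
    ext a
    by_cases h : a = i0
    · subst h; simp
    · simp [Function.update_of_ne h, Pi.single_eq_of_ne h]
  have hCE : C * E i0 i0 = C := by
    rw [hC, vecMulVec_mul, hrow]
  have hEWm : E i0 i0 * Wm = Wm := by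
    rw [hWm, mul_vecMulVec, hcol]
  set s : R := ∑ t, w t * c t with hs
  have hWmC : Wm * C = Matrix.single i0 i0 s := by
    rw [hWm, hC, vecMulVec_mul]
    ext a b
    simp only [Matrix.vecMulVec_apply, Matrix.single, Matrix.of_apply, Pi.single_apply,
      Matrix.vecMul, dotProduct, hs]
    by_cases ha : a = i0 <;> by_cases hb : b = i0 <;>
      simp [ha, hb, eq_comm, Finset.mul_sum, Finset.sum_mul, mul_assoc]
  -- right-associated rewriting helpers
  have hEE' : ∀ (i j k l : Fin n) (X : Matrix (Fin n) (Fin n) R),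
      E i j * (E k l * X) = if j = k then E i l * X else 0 := by
    intro i j k l X
    rw [← mul_assoc, hEmul]
    split_ifs <;> simp
  have hgg' : ∀ (i j k l : Fin n) (X : Matrix (Fin n) (Fin n) R),
      g i j * (g k l * X) = if j = k then g i l * X else 0 := by
    intro i j k l X
    rw [← mul_assoc, hgmul]
    split_ifs <;> simp
  have hCW' : ∀ X : Matrix (Fin n) (Fin n) R, C * (Wm * X) = g i0 i0 * X := by
    intro X; rw [← mul_assoc, hCWm]
  have hEW' : ∀ X : Matrix (Fin n) (Fin n) R, E i0 i0 * (Wm * X) = Wm * X := by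
    intro X; rw [← mul_assoc, hEWm]
  have hWC' : ∀ X : Matrix (Fin n) (Fin n) R,
      Wm * (C * X) = Matrix.single i0 i0 s * X := by
    intro X; rw [← mul_assoc, hWmC]
  -- the candidate conjugating matrices
  set u : Matrix (Fin n) (Fin n) R := ∑ j, g j i0 * C * E i0 j with hu
  set v : Matrix (Fin n) (Fin n) R := ∑ j, E j i0 * Wm * g i0 j with hv
  have huv : u * v = 1 := by
    rw [hu, hv, Finset.sum_mul_sum]
    have hterm : ∀ j k, (g j i0 * C * E i0 j) * (E k i0 * Wm * g i0 k)
        = if j = k then g j j else 0 := by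
      intro j k
      simp only [mul_assoc]
      rw [hEE']
      by_cases h : j = k
      · subst h
        rw [if_pos rfl, hEW', hCW', hgg', if_pos rfl, hgmul, if_pos rfl]
        simp
      · rw [if_neg h, mul_zero, mul_zero]
        simp [h]
    calc (∑ j, ∑ k, (g j i0 * C * E i0 j) * (E k i0 * Wm * g i0 k))
        = ∑ j, ∑ k, if j = k then g j j else 0 := by
          exact Finset.sum_congr rfl fun j _ => Finset.sum_congr rfl fun k _ => hterm j k
      _ = ∑ j, g j j := by
          refine Finset.sum_congr rfl fun j _ => ?_
          rw [Finset.sum_ite_eq]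
          simp
      _ = 1 := hgsum
  have hgCs : g i0 i0 * C = C * Matrix.single i0 i0 s := by
    rw [← hCWm, mul_assoc, hWmC]
  have hgCs' : ∀ X : Matrix (Fin n) (Fin n) R,
      g i0 i0 * (C * X) = C * (Matrix.single i0 i0 s * X) := by
    intro X; rw [← mul_assoc, hgCs, mul_assoc]
  have hSS' : ∀ X : Matrix (Fin n) (Fin n) R,
      Matrix.single i0 i0 s * (Matrix.single i0 i0 s * X)
        = Matrix.single i0 i0 (s * s) * X := by
    intro X; rw [← mul_assoc, Matrix.single_mul_single_same]
  have hEstdE : ∀ (j : Fin n) (r : R),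
      E j i0 * (Matrix.single i0 i0 r * E i0 j) = Matrix.single j j r := by
    intro j r
    rw [← mul_assoc, hE]
    simp only
    rw [Matrix.single_mul_single_same, Matrix.single_mul_single_same, one_mul, mul_one]
  have hdiagsum : ∀ r : R, (∑ j : Fin n, Matrix.single j j r)
      = Matrix.scalar (Fin n) r := by
    intro r
    ext a b
    rw [Matrix.scalar_apply]
    simp only [Matrix.sum_apply, Matrix.single, Matrix.of_apply, Matrix.diagonal_apply]
    by_cases h : a = b
    · subst h; rw [if_pos rfl, Finset.sum_eq_single a] <;> simp +contextual
    · rw [if_neg h, Finset.sum_eq_zero]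
      intro i _
      by_cases h1 : i = a <;> by_cases h2 : i = b <;> simp_all
  have hvu2 : v * u = Matrix.scalar (Fin n) (s * s) := by
    rw [hu, hv, Finset.sum_mul_sum]
    have hterm : ∀ j k, (E j i0 * Wm * g i0 j) * (g k i0 * C * E i0 k)
        = if j = k then Matrix.single j j (s * s) else 0 := by
      intro j k
      simp only [mul_assoc]
      rw [hgg']
      by_cases h : j = k
      · subst h
        rw [if_pos rfl, hgCs', hWC', hSS', hEstdE]
        simp
      · rw [if_neg h, mul_zero, mul_zero]
        simp [h]
    calc (∑ j, ∑ k, (E j i0 * Wm * g i0 j) * (g k i0 * C * E i0 k))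
        = ∑ j, ∑ k, if j = k then Matrix.single j j (s * s) else 0 := by
          exact Finset.sum_congr rfl fun j _ => Finset.sum_congr rfl fun k _ => hterm j k
      _ = ∑ j, Matrix.single j j (s * s) := by
          refine Finset.sum_congr rfl fun j _ => ?_
          rw [Finset.sum_ite_eq]
          simp
      _ = Matrix.scalar (Fin n) (s * s) := hdiagsum _
  -- v * u is an idempotent scalar, hence 1
  have hvu : v * u = 1 := by
    have hidem : (v * u) * (v * u) = v * u := by
      calc (v * u) * (v * u) = v * (u * (v * u)) := by rw [mul_assoc]
        _ = v * ((u * v) * u) := by rw [← mul_assoc u v u]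
        _ = v * u := by rw [huv, one_mul]
    rw [hvu2, ← map_mul] at hidem
    have hs4 : (s * s) * (s * s) = s * s := Matrix.scalar_inj.mp hidem
    have : (s * s) * ((s * s) - 1) = 0 := by rw [mul_sub, hs4, mul_one, sub_self]
    rcases mul_eq_zero.mp this with h | h
    · exfalso
      have hvu0 : v * u = 0 := by rw [hvu2, h, map_zero]
      have : (1 : Matrix (Fin n) (Fin n) R) = 0 := by
        calc (1 : Matrix (Fin n) (Fin n) R) = (u * v) * (u * v) := by rw [huv, one_mul]
          _ = u * ((v * u) * v) := by rw [mul_assoc, ← mul_assoc v u v]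
          _ = 0 := by rw [hvu0, zero_mul, mul_zero]
      exact one_ne_zero this
    · have hs1 : s * s = 1 := by rwa [sub_eq_zero] at h
      rw [hvu2, hs1, map_one]
  -- intertwining relations
  have hint : ∀ i j, g i j * u = u * E i j := by
    intro i j
    rw [hu, Finset.mul_sum, Finset.sum_mul]
    have h1 : ∀ k, g i j * (g k i0 * C * E i0 k)
        = if j = k then g i i0 * (C * E i0 k) else 0 := by
      intro k
      simp only [mul_assoc]
      rw [hgg']
    have h2 : ∀ k, (g k i0 * C * E i0 k) * E i j
        = if k = i then g k i0 * (C * E i0 j) else 0 := by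
      intro k
      simp only [mul_assoc]
      rw [hEmul]
      by_cases h : k = i
      · subst h; simp
      · simp [h]
    rw [Finset.sum_congr rfl fun k _ => h1 k, Finset.sum_congr rfl fun k _ => h2 k,
      Finset.sum_ite_eq, Finset.sum_ite_eq']
    simp
  have hintv : ∀ i j, v * g i j = E i j * v := by
    intro i j
    rw [hv, Finset.mul_sum, Finset.sum_mul]
    have h1 : ∀ k, (E k i0 * Wm * g i0 k) * g i j
        = if k = i then E k i0 * (Wm * g i0 j) else 0 := by
      intro k
      simp only [mul_assoc]
      rw [hgmul]
      by_cases h : k = i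
      · subst h; simp
      · simp [h]
    have h2 : ∀ k, E i j * (E k i0 * Wm * g i0 k)
        = if j = k then E i i0 * (Wm * g i0 k) else 0 := by
      intro k
      simp only [mul_assoc]
      rw [hEE']
    rw [Finset.sum_congr rfl fun k _ => h1 k, Finset.sum_congr rfl fun k _ => h2 k,
      Finset.sum_ite_eq', Finset.sum_ite_eq]
    simp
  clear_value u v
  -- scalar matrices commute with matrix units
  have hscalE : ∀ (r : R) (i j : Fin n),
      Matrix.scalar (Fin n) r * E i j = E i j * Matrix.scalar (Fin n) r := by
    intro r i j
    ext a b
    rw [Matrix.scalar_apply, Matrix.diagonal_mul, Matrix.mul_diagonal]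
    simp [hE, Matrix.single, mul_ite, ite_mul]
  -- centralizer of the matrix units
  have hcent : ∀ X : Matrix (Fin n) (Fin n) R, (∀ i j, X * E i j = E i j * X) →
      X = Matrix.scalar (Fin n) (X i0 i0) := by
    intro X hX
    have hdiag : ∀ i j : Fin n, X i i = X j j := by
      intro i j
      have h := congrFun (congrFun (hX i j) i) j
      simp only [hE] at h
      rw [Matrix.mul_single_apply_same, Matrix.single_mul_apply_same,
        mul_one, one_mul] at h
      exact h
    have hoff : ∀ p i : Fin n, p ≠ i → X p i = 0 := by
      intro p i hpi
      have h := congrFun (congrFun (hX i i) p) i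
      simp only [hE] at h
      rw [Matrix.mul_single_apply_same,
        Matrix.single_mul_apply_of_ne _ _ _ _ _ hpi, mul_one] at h
      exact h
    ext a b
    rw [Matrix.scalar_apply, Matrix.diagonal_apply]
    by_cases h : a = b
    · subst h; rw [if_pos rfl]; exact hdiag a i0
    · rw [if_neg h]; exact hoff a b h
  -- conjugation helpers
  have hconj1 : ∀ X : Matrix (Fin n) (Fin n) R, u * (v * X * u) * v = X := by
    intro X
    have h1 : u * (v * X * u) = X * u := by
      rw [← mul_assoc, ← mul_assoc, huv, one_mul]
    rw [h1, mul_assoc, huv, mul_one]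
  have hconj2 : ∀ X : Matrix (Fin n) (Fin n) R, v * (u * X * v) * u = X := by
    intro X
    have h1 : v * (u * X * v) = X * v := by
      rw [← mul_assoc, ← mul_assoc, hvu, one_mul]
    rw [h1, mul_assoc, hvu, mul_one]
  have hsplit : ∀ X Y : Matrix (Fin n) (Fin n) R,
      v * (X * Y) * u = (v * X * u) * (v * Y * u) := by
    intro X Y
    have h1 : u * (v * (Y * u)) = Y * u := by rw [← mul_assoc, huv, one_mul]
    calc v * (X * Y) * u = v * (X * (Y * u)) := by rw [mul_assoc, mul_assoc X Y u]
      _ = (v * X) * (Y * u) := by rw [← mul_assoc]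
      _ = (v * X) * (u * (v * (Y * u))) := by rw [h1]
      _ = ((v * X) * u) * (v * (Y * u)) := by rw [← mul_assoc]
      _ = (v * X * u) * (v * Y * u) := by rw [← mul_assoc v Y u]
  -- the induced map on scalars
  have hDcomm : ∀ r : R, ∀ i j, (v * φ (Matrix.scalar (Fin n) r) * u) * E i j
      = E i j * (v * φ (Matrix.scalar (Fin n) r) * u) := by
    intro r i j
    have hφcomm : φ (Matrix.scalar (Fin n) r) * g i j = g i j * φ (Matrix.scalar (Fin n) r) := by
      rw [hg]
      simp only
      rw [← map_mul, ← map_mul, hscalE]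
    calc (v * φ (Matrix.scalar (Fin n) r) * u) * E i j
        = v * φ (Matrix.scalar (Fin n) r) * (u * E i j) := by rw [mul_assoc]
      _ = v * φ (Matrix.scalar (Fin n) r) * (g i j * u) := by rw [← hint]
      _ = v * (φ (Matrix.scalar (Fin n) r) * g i j) * u := by
          rw [← mul_assoc (v * φ (Matrix.scalar (Fin n) r)) (g i j) u,
            mul_assoc v (φ (Matrix.scalar (Fin n) r)) (g i j)]
      _ = v * (g i j * φ (Matrix.scalar (Fin n) r)) * u := by rw [hφcomm]
      _ = (v * g i j) * (φ (Matrix.scalar (Fin n) r) * u) := by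
          rw [← mul_assoc v (g i j) (φ (Matrix.scalar (Fin n) r)),
            mul_assoc (v * g i j) (φ (Matrix.scalar (Fin n) r)) u]
      _ = (E i j * v) * (φ (Matrix.scalar (Fin n) r) * u) := by rw [hintv]
      _ = E i j * (v * φ (Matrix.scalar (Fin n) r) * u) := by
          rw [mul_assoc, ← mul_assoc v _ u]
  set α₀ : R → R := fun r => (v * φ (Matrix.scalar (Fin n) r) * u) i0 i0 with hα₀
  have hD : ∀ r : R, v * φ (Matrix.scalar (Fin n) r) * u = Matrix.scalar (Fin n) (α₀ r) :=
    fun r => hcent _ (hDcomm r)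
  -- inverse map
  have hD'comm : ∀ r : R, ∀ i j,
      (φ.symm (u * Matrix.scalar (Fin n) r * v)) * E i j
        = E i j * (φ.symm (u * Matrix.scalar (Fin n) r * v)) := by
    intro r i j
    have hEg : E i j = φ.symm (g i j) := by rw [hg]; simp
    have hmid : (u * Matrix.scalar (Fin n) r * v) * g i j
        = g i j * (u * Matrix.scalar (Fin n) r * v) := by
      calc (u * Matrix.scalar (Fin n) r * v) * g i j
          = u * Matrix.scalar (Fin n) r * (v * g i j) := by rw [mul_assoc]
        _ = u * Matrix.scalar (Fin n) r * (E i j * v) := by rw [hintv]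
        _ = u * (Matrix.scalar (Fin n) r * E i j) * v := by
            rw [← mul_assoc (u * Matrix.scalar (Fin n) r) (E i j) v,
              mul_assoc u (Matrix.scalar (Fin n) r) (E i j)]
        _ = u * (E i j * Matrix.scalar (Fin n) r) * v := by rw [hscalE]
        _ = (u * E i j) * (Matrix.scalar (Fin n) r * v) := by
            rw [← mul_assoc u (E i j) (Matrix.scalar (Fin n) r),
              mul_assoc (u * E i j) (Matrix.scalar (Fin n) r) v]
        _ = (g i j * u) * (Matrix.scalar (Fin n) r * v) := by rw [← hint]
        _ = g i j * (u * Matrix.scalar (Fin n) r * v) := by rw [mul_assoc, ← mul_assoc u _ v]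
    rw [hEg, ← map_mul, ← map_mul, hmid]
  set β₀ : R → R := fun r => (φ.symm (u * Matrix.scalar (Fin n) r * v)) i0 i0 with hβ₀
  have hD' : ∀ r : R, φ.symm (u * Matrix.scalar (Fin n) r * v) = Matrix.scalar (Fin n) (β₀ r) :=
    fun r => hcent _ (hD'comm r)
  -- α₀ is a T-algebra automorphism
  have hβα : ∀ r : R, β₀ (α₀ r) = r := by
    intro r
    have : φ.symm (u * Matrix.scalar (Fin n) (α₀ r) * v) = Matrix.scalar (Fin n) r := by
      rw [← hD r, hconj1]
      simp
    rw [hD' (α₀ r)] at this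
    exact Matrix.scalar_inj.mp this
  have hαβ : ∀ r : R, α₀ (β₀ r) = r := by
    intro r
    have : v * φ (Matrix.scalar (Fin n) (β₀ r)) * u = Matrix.scalar (Fin n) r := by
      rw [← hD' r, AlgEquiv.apply_symm_apply, hconj2]
    rw [hD (β₀ r)] at this
    exact Matrix.scalar_inj.mp this
  have haddα : ∀ r r' : R, α₀ (r + r') = α₀ r + α₀ r' := by
    intro r r'
    have : Matrix.scalar (Fin n) (α₀ (r + r')) = Matrix.scalar (Fin n) (α₀ r + α₀ r') := by
      rw [map_add, ← hD r, ← hD r', ← hD (r + r'), map_add (Matrix.scalar (Fin n)), map_add,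
        mul_add, add_mul]
    exact Matrix.scalar_inj.mp this
  have hmulα : ∀ r r' : R, α₀ (r * r') = α₀ r * α₀ r' := by
    intro r r'
    have : Matrix.scalar (Fin n) (α₀ (r * r')) = Matrix.scalar (Fin n) (α₀ r * α₀ r') := by
      rw [map_mul, ← hD r, ← hD r', ← hD (r * r'), map_mul (Matrix.scalar (Fin n)), map_mul,
        hsplit]
    exact Matrix.scalar_inj.mp this
  have hcommT : ∀ t : T, α₀ (algebraMap T R t) = algebraMap T R t := by
    intro t
    have hsc : Matrix.scalar (Fin n) (algebraMap T R t)
        = algebraMap T (Matrix (Fin n) (Fin n) R) t := by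
      rw [Matrix.algebraMap_eq_diagonal, Matrix.scalar_apply]
      rfl
    have : Matrix.scalar (Fin n) (α₀ (algebraMap T R t))
        = Matrix.scalar (Fin n) (algebraMap T R t) := by
      rw [← hD, hsc, AlgEquiv.commutes, ← Algebra.commutes t v, mul_assoc, hvu, mul_one]
    exact Matrix.scalar_inj.mp this
  set αe : R ≃ₐ[T] R :=
    { toFun := α₀
      invFun := β₀
      left_inv := hβα
      right_inv := hαβ
      map_mul' := hmulα
      map_add' := haddα
      commutes' := hcommT } with hαe
  set U : (Matrix (Fin n) (Fin n) R)ˣ := ⟨u, v, huv, hvu⟩ with hU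
  refine ⟨U, αe, ?_⟩
  intro A
  have hUinv : (Units.val U⁻¹) = v := rfl
  rw [hUinv]
  show φ A = u * A.map α₀ * v
  -- decomposition of standard basis matrices
  have hgdef : ∀ i j, φ (E i j) = g i j := fun _ _ => rfl
  have hstd1 : ∀ (i : Fin n) (r : R),
      E i i0 * Matrix.scalar (Fin n) r = Matrix.single i i0 r := by
    intro i r
    ext a b
    rw [Matrix.scalar_apply, Matrix.mul_diagonal]
    simp [hE, Matrix.single, ite_mul]
  have hstd : ∀ (i j : Fin n) (r : R),
      E i i0 * Matrix.scalar (Fin n) r * E i0 j = Matrix.single i j r := by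
    intro i j r
    rw [hstd1, hE]
    simp only
    rw [Matrix.single_mul_single_same, mul_one]
  have hconj3 : ∀ (i j : Fin n) (X : Matrix (Fin n) (Fin n) R),
      u * (E i i0 * X * E i0 j) * v = g i i0 * (u * X * v) * g i0 j := by
    intro i j X
    have h1 : u * (E i i0 * X * E i0 j) = ((u * E i i0) * X) * E i0 j := by
      rw [← mul_assoc, ← mul_assoc]
    rw [h1, mul_assoc (((u * E i i0) * X)) (E i0 j) v, ← hint i i0, ← hintv i0 j,
      mul_assoc (g i i0) u X, ← mul_assoc (g i i0 * (u * X)) v (g i0 j),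
      mul_assoc (g i i0) (u * X) v]
  have hterm : ∀ (i j : Fin n) (r : R),
      u * Matrix.single i j (α₀ r) * v
        = g i i0 * φ (Matrix.scalar (Fin n) r) * g i0 j := by
    intro i j r
    rw [← hstd i j (α₀ r), hconj3, ← hD r, hconj1]
  calc φ A = ∑ i, ∑ j, φ (Matrix.single i j (A i j)) := by
        conv_lhs => rw [Matrix.matrix_eq_sum_single A]
        rw [map_sum]
        exact Finset.sum_congr rfl fun i _ => map_sum φ _ _
    _ = ∑ i, ∑ j, u * Matrix.single i j (α₀ (A i j)) * v := by
        refine Finset.sum_congr rfl fun i _ => Finset.sum_congr rfl fun j _ => ?_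
        rw [← hstd i j (A i j), map_mul, map_mul, hgdef, hgdef, hterm]
    _ = u * (A.map α₀) * v := by
        have hsum2 : u * (A.map α₀) * v
            = ∑ i, ∑ j, u * Matrix.single i j (α₀ (A i j)) * v := by
          conv_lhs => rw [Matrix.matrix_eq_sum_single (A.map α₀)]
          rw [Finset.mul_sum, Finset.sum_mul]
          refine Finset.sum_congr rfl fun i _ => ?_
          rw [Finset.mul_sum, Finset.sum_mul]
          refine Finset.sum_congr rfl fun j _ => ?_
          rw [Matrix.map_apply]
        exact hsum2.symm
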